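/- Let λ > 1, a ≥ 1, and N, N' be nonzero real numbers. For each n ≥ 1 define bₙ by the equation (λ^(an) + λ^(−an) − 2)/(N')² = ((λⁿ + λ⁻ⁿ − 2)/N²)^(bₙ) (assuming both sides exceed 1 for large n so bₙ is well-defined). Then bₙ → a as n → ∞. -/

import Mathlib

open Filter

lemma aux_log_div_tendsto (lam c K : ℝ) (hlam : 1 < lam) (hc : 0 < c) (hK : K ≠ 0) :
    Tendsto (fun n : ℕ =>
        Real.log ((lam ^ (c * (n : ℝ)) + lam ^ (-(c * (n : ℝ))) - 2) / K ^ 2) / n)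
      atTop (nhds (c * Real.log lam)) := by
  have hlam0 : (0 : ℝ) < lam := lt_trans one_pos hlam
  set s : ℝ := lam ^ c with hs
  set r : ℝ := lam ^ (-c) with hr
  have hs1 : 1 < s := Real.one_lt_rpow_iff_of_pos hlam0 |>.2 (Or.inl ⟨hlam, hc⟩)
  have hr0 : 0 < r := Real.rpow_pos_of_pos hlam0 _
  have hr1 : r < 1 := Real.rpow_lt_one_of_one_lt_of_neg hlam (neg_lt_zero.mpr hc)
  have hsr : s * r = 1 := by
    rw [hs, hr, ← Real.rpow_add hlam0]
    simp
  have hK2 : (0 : ℝ) < K ^ 2 := by positivity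
  have hlogs : Real.log s = c * Real.log lam := Real.log_rpow hlam0 c
  -- limit of the correction term
  have hrn : Tendsto (fun n : ℕ => r ^ n) atTop (nhds 0) :=
    tendsto_pow_atTop_nhds_zero_of_lt_one hr0.le hr1
  have h1r : Tendsto (fun n : ℕ => 1 - r ^ n) atTop (nhds 1) := by
    have := (tendsto_const_nhds (x := (1:ℝ)) (f := atTop (α := ℕ))).sub hrn
    simpa using this
  have hlog1r : Tendsto (fun n : ℕ => Real.log (1 - r ^ n)) atTop (nhds 0) := by
    have hc1 : ContinuousAt Real.log 1 := Real.continuousAt_log one_ne_zero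
    have := hc1.tendsto.comp h1r
    simpa [Function.comp_def] using this
  have hcorr : Tendsto (fun n : ℕ =>
      (2 * Real.log (1 - r ^ n) - Real.log (K ^ 2)) * (n : ℝ)⁻¹) atTop (nhds 0) := by
    have h1 : Tendsto (fun n : ℕ => 2 * Real.log (1 - r ^ n) - Real.log (K ^ 2)) atTop
        (nhds (2 * 0 - Real.log (K ^ 2))) :=
      ((hlog1r.const_mul 2).sub tendsto_const_nhds)
    have := h1.mul tendsto_inv_atTop_nhds_zero_nat
    simpa using this
  have hg : Tendsto (fun n : ℕ =>
      Real.log s + (2 * Real.log (1 - r ^ n) - Real.log (K ^ 2)) * (n : ℝ)⁻¹) atTop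
      (nhds (c * Real.log lam)) := by
    have := (tendsto_const_nhds (x := Real.log s) (f := atTop (α := ℕ))).add hcorr
    simpa [hlogs] using this
  refine hg.congr' ?_
  filter_upwards [eventually_ge_atTop 1] with n hn
  have hn0 : (n : ℝ) ≠ 0 := Nat.cast_ne_zero.mpr (by omega)
  have hrnlt : r ^ n < 1 := pow_lt_one₀ hr0.le hr1 (by omega)
  have h1rn : 0 < 1 - r ^ n := by linarith
  -- rewrite rpow as pow
  have hpow1 : lam ^ (c * (n : ℝ)) = s ^ n := by
    rw [hs, ← Real.rpow_natCast (lam ^ c) n, ← Real.rpow_mul hlam0.le]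
  have hpow2 : lam ^ (-(c * (n : ℝ))) = r ^ n := by
    rw [hr, ← Real.rpow_natCast (lam ^ (-c)) n, ← Real.rpow_mul hlam0.le]
    ring_nf
  have hsrn : s ^ n * r ^ n = 1 := by rw [← mul_pow, hsr, one_pow]
  have hkey : lam ^ (c * (n : ℝ)) + lam ^ (-(c * (n : ℝ))) - 2
      = s ^ n * (1 - r ^ n) ^ 2 := by
    have expand : s ^ n * (1 - r ^ n) ^ 2
        = s ^ n - 2 * (s ^ n * r ^ n) + s ^ n * r ^ n * r ^ n := by ring
    rw [hpow1, hpow2, expand, hsrn]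
    ring
  rw [hkey]
  have hsn : (0 : ℝ) < s ^ n := pow_pos (lt_trans one_pos hs1) n
  rw [Real.log_div (by positivity) (by positivity), Real.log_mul (by positivity) (by positivity),
    Real.log_pow, Real.log_pow, Real.log_pow]
  push_cast
  field_simp
  ring

theorem tendsto_exponents_of_translation_vectors (lam a N N' : ℝ) (b : ℕ → ℝ)
    (hlam : 1 < lam) (ha : 1 ≤ a) (hN : N ≠ 0) (hN' : N' ≠ 0)
    (h : ∃ n₀ : ℕ, ∀ n : ℕ, n₀ ≤ n →
      1 < (lam ^ (a * n) + lam ^ (-(a * n)) - 2) / N' ^ 2 ∧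
      1 < (lam ^ (n : ℝ) + lam ^ (-(n : ℝ)) - 2) / N ^ 2 ∧
      (lam ^ (a * n) + lam ^ (-(a * n)) - 2) / N' ^ 2 =
        ((lam ^ (n : ℝ) + lam ^ (-(n : ℝ)) - 2) / N ^ 2) ^ (b n)) :
    Tendsto b atTop (nhds a) := by
  obtain ⟨n₀, hh⟩ := h
  have hL : 0 < Real.log lam := Real.log_pos hlam
  have hA := aux_log_div_tendsto lam a N' hlam (lt_of_lt_of_le one_pos ha) hN'
  have hB : Tendsto (fun n : ℕ =>
      Real.log ((lam ^ (n : ℝ) + lam ^ (-(n : ℝ)) - 2) / N ^ 2) / n) atTop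
      (nhds (Real.log lam)) := by
    have := aux_log_div_tendsto lam 1 N hlam one_pos hN
    simpa [one_mul] using this
  have hdiv := hA.div hB hL.ne'
  have hval : a * Real.log lam / Real.log lam = a := by
    field_simp
  rw [hval] at hdiv
  refine hdiv.congr' ?_
  filter_upwards [eventually_ge_atTop (max n₀ 1)] with n hn
  obtain ⟨h1, h2, h3⟩ := hh n (le_trans (le_max_left _ _) hn)
  have hn0 : (n : ℝ) ≠ 0 := Nat.cast_ne_zero.mpr (by omega)
  have hB0 : (0 : ℝ) < (lam ^ (n : ℝ) + lam ^ (-(n : ℝ)) - 2) / N ^ 2 :=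
    lt_trans one_pos h2
  have hlogB : 0 < Real.log ((lam ^ (n : ℝ) + lam ^ (-(n : ℝ)) - 2) / N ^ 2) :=
    Real.log_pos h2
  have hlogA : Real.log ((lam ^ (a * (n : ℝ)) + lam ^ (-(a * (n : ℝ))) - 2) / N' ^ 2)
      = b n * Real.log ((lam ^ (n : ℝ) + lam ^ (-(n : ℝ)) - 2) / N ^ 2) := by
    rw [h3, Real.log_rpow hB0]
  simp only [Pi.div_apply]
  rw [hlogA]
  have hlogB' := hlogB
  rw [Real.rpow_natCast] at hlogB'
  field_simp
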